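/- For every natural number p ≥ 1 and real R ≥ 2, |∑_{n ≤ R} n^p · log(R/n) − R^{p+1}/(p+1)²| ≤ C_p · R^p · log R for a constant C_p depending only on p. -/

import Mathlib

open Finset Real

lemma pow_succ_sub_le_aux (p : ℕ) {a b : ℝ} (hb : 0 ≤ b) (hba : b ≤ a) :
    a ^ (p + 1) - b ^ (p + 1) ≤ ((p : ℝ) + 1) * a ^ p * (a - b) := by
  have ha : 0 ≤ a := hb.trans hba
  have h := geom_sum₂_mul a b (p + 1)
  rw [← h]
  have hsum : (∑ i ∈ Finset.range (p + 1), a ^ i * b ^ (p + 1 - 1 - i)) ≤ ((p : ℝ) + 1) * a ^ p := by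
    have hterm : ∀ i ∈ Finset.range (p + 1), a ^ i * b ^ (p + 1 - 1 - i) ≤ a ^ p := by
      intro i hi
      have hip : i ≤ p := Nat.lt_succ_iff.mp (Finset.mem_range.mp hi)
      calc a ^ i * b ^ (p + 1 - 1 - i) ≤ a ^ i * a ^ (p + 1 - 1 - i) :=
            mul_le_mul_of_nonneg_left (pow_le_pow_left₀ hb hba _) (pow_nonneg ha _)
        _ = a ^ p := by rw [← pow_add]; congr 1; omega
    calc (∑ i ∈ Finset.range (p + 1), a ^ i * b ^ (p + 1 - 1 - i))
        ≤ ∑ _i ∈ Finset.range (p + 1), a ^ p := Finset.sum_le_sum hterm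
      _ = ((p : ℝ) + 1) * a ^ p := by
          rw [Finset.sum_const, Finset.card_range, nsmul_eq_mul]; push_cast; ring
  calc (∑ i ∈ Finset.range (p + 1), a ^ i * b ^ (p + 1 - 1 - i)) * (a - b)
      ≤ (((p : ℝ) + 1) * a ^ p) * (a - b) :=
        mul_le_mul_of_nonneg_right hsum (by linarith)
    _ = ((p : ℝ) + 1) * a ^ p * (a - b) := by ring

lemma integral_pow_mul_log (p : ℕ) {N : ℝ} (hN : 1 ≤ N) :
    ∫ x in (1:ℝ)..N, x ^ p * Real.log x =
      N ^ (p + 1) * Real.log N / ((p : ℝ) + 1) - (N ^ (p + 1) - 1) / ((p : ℝ) + 1) ^ 2 := by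
  have hq : ((p : ℝ) + 1) ≠ 0 := by positivity
  have hderiv : ∀ x ∈ Set.uIcc (1:ℝ) N, HasDerivAt
      (fun x : ℝ => x ^ (p + 1) * Real.log x / ((p : ℝ) + 1) - x ^ (p + 1) / ((p : ℝ) + 1) ^ 2)
      (x ^ p * Real.log x) x := by
    intro x hx
    rw [Set.uIcc_of_le hN] at hx
    have hx0 : (0:ℝ) < x := lt_of_lt_of_le one_pos hx.1
    have h1 : HasDerivAt (fun x : ℝ => x ^ (p + 1)) (((p : ℝ) + 1) * x ^ p) x := by
      simpa using hasDerivAt_pow (p + 1) x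
    have h2 : HasDerivAt Real.log x⁻¹ x := Real.hasDerivAt_log (ne_of_gt hx0)
    have h4 := ((h1.mul h2).div_const ((p : ℝ) + 1)).sub (h1.div_const (((p : ℝ) + 1) ^ 2))
    refine HasDerivAt.congr_deriv h4 ?_
    have hx' : x ≠ 0 := ne_of_gt hx0
    field_simp
    ring
  have hint : IntervalIntegrable (fun x : ℝ => x ^ p * Real.log x) MeasureTheory.volume 1 N := by
    apply ContinuousOn.intervalIntegrable
    apply ContinuousOn.mul (continuous_pow p).continuousOn
    apply Real.continuousOn_log.mono
    intro x hx
    rw [Set.uIcc_of_le hN] at hx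
    simp only [Set.mem_compl_iff, Set.mem_singleton_iff]
    intro h
    rw [h] at hx
    linarith [hx.1]
  rw [intervalIntegral.integral_eq_sub_of_hasDerivAt hderiv hint]
  simp [Real.log_one]
  ring

set_option maxHeartbeats 1000000 in
theorem sum_pow_log_asymp (p : ℕ) (hp : 1 ≤ p) :
    ∃ C : ℝ, 0 < C ∧ ∀ R : ℝ, 2 ≤ R →
      |(∑ n ∈ Finset.Icc 1 ⌊R⌋₊, (n : ℝ) ^ p * Real.log (R / n)) -
          R ^ (p + 1) / ((p : ℝ) + 1) ^ 2| ≤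
        C * R ^ p * Real.log R := by
  refine ⟨8, by norm_num, fun R hR => ?_⟩
  set N := ⌊R⌋₊ with hNdef
  have hR0 : (0:ℝ) < R := by linarith
  have hN2 : 2 ≤ N := Nat.le_floor (by exact_mod_cast hR)
  have hNR : (N:ℝ) ≤ R := Nat.floor_le (by linarith)
  have hRN : R < N + 1 := Nat.lt_floor_add_one R
  have hN1 : (1:ℝ) ≤ (N:ℝ) := by exact_mod_cast Nat.one_le_of_lt hN2
  have hN0 : (0:ℝ) < (N:ℝ) := by linarith
  have hL2 : (1:ℝ)/2 ≤ Real.log R := by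
    have h1 := Real.log_two_gt_d9
    have h2 : Real.log 2 ≤ Real.log R := Real.log_le_log (by norm_num) hR
    linarith
  have hL0 : (0:ℝ) ≤ Real.log R := by linarith
  set T1 := ∑ n ∈ Finset.Icc 1 N, (n:ℝ) ^ p with hT1
  set T2 := ∑ n ∈ Finset.Icc 1 N, (n:ℝ) ^ p * Real.log n with hT2
  set q : ℝ := (p:ℝ) + 1 with hq
  have hq2 : (2:ℝ) ≤ q := by
    have : (1:ℝ) ≤ (p:ℝ) := by exact_mod_cast hp
    rw [hq]; linarith
  have hq0 : (0:ℝ) < q := by linarith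
  have hq2pos : (0:ℝ) < q ^ 2 := by positivity
  have hq4 : (4:ℝ) ≤ q ^ 2 := by nlinarith
  -- rewrite the sum
  have hsum : (∑ n ∈ Finset.Icc 1 N, (n:ℝ) ^ p * Real.log (R / n))
      = Real.log R * T1 - T2 := by
    rw [hT1, hT2, Finset.mul_sum, ← Finset.sum_sub_distrib]
    apply Finset.sum_congr rfl
    intro n hn
    have hn1 : 1 ≤ n := (Finset.mem_Icc.mp hn).1
    have hn0 : (0:ℝ) < (n:ℝ) := by exact_mod_cast Nat.pos_of_ne_zero (by omega)
    rw [Real.log_div (ne_of_gt hR0) (ne_of_gt hn0)]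
    ring
  -- bounds for T1
  have hmono1 : MonotoneOn (fun x : ℝ => x ^ p) (Set.Icc ((0:ℕ):ℝ) ((N:ℕ):ℝ)) := by
    intro x hx y _ hxy
    exact pow_le_pow_left₀ (by simpa using hx.1) hxy p
  have key1a := hmono1.sum_le_integral_Ico (Nat.zero_le N)
  have key1b := hmono1.integral_le_sum_Ico (Nat.zero_le N)
  have hint1 : (∫ x in ((0:ℕ):ℝ)..((N:ℕ):ℝ), x ^ p) = (N:ℝ) ^ (p+1) / q := by
    rw [integral_pow]
    rw [hq]
    norm_num
  have hS1a : (∑ x ∈ Finset.Ico 0 N, ((x:ℕ):ℝ) ^ p) = T1 - (N:ℝ) ^ p := by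
    have e1 : (∑ x ∈ Finset.Ico 0 (N+1), ((x:ℕ):ℝ) ^ p)
        = (∑ x ∈ Finset.Ico 0 N, ((x:ℕ):ℝ) ^ p) + (N:ℝ) ^ p :=
      Finset.sum_Ico_succ_top (Nat.zero_le N) _
    have e2 : (∑ x ∈ Finset.Ico 0 (N+1), ((x:ℕ):ℝ) ^ p)
        = ((0:ℕ):ℝ) ^ p + ∑ x ∈ Finset.Ico 1 (N+1), ((x:ℕ):ℝ) ^ p :=
      Finset.sum_eq_sum_Ico_succ_bot (by omega) _
    simp only [Finset.Ico_add_one_right_eq_Icc] at e1 e2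
    rw [hT1]
    have h0 : ((0:ℕ):ℝ) ^ p = 0 := by
      simp [zero_pow (by omega : p ≠ 0)]
    rw [h0, zero_add] at e2
    linarith [e1, e2]
  have hS1b : (∑ i ∈ Finset.Ico 0 N, ((i + 1 : ℕ):ℝ) ^ p) = T1 := by
    rw [show (∑ i ∈ Finset.Ico 0 N, ((i + 1 : ℕ):ℝ) ^ p)
        = ∑ i ∈ Finset.Ico 0 N, (fun j : ℕ => ((j:ℕ):ℝ) ^ p) (i + 1) from rfl]
    rw [Finset.sum_Ico_add' (fun j : ℕ => ((j:ℕ):ℝ) ^ p) 0 N 1]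
    rw [zero_add, Finset.Ico_add_one_right_eq_Icc, hT1]
  rw [hint1, hS1a] at key1a
  rw [hint1, hS1b] at key1b
  -- bounds for T2
  have hmono2 : MonotoneOn (fun x : ℝ => x ^ p * Real.log x)
      (Set.Icc ((1:ℕ):ℝ) ((N:ℕ):ℝ)) := by
    intro x hx y hy hxy
    have hx1 : (1:ℝ) ≤ x := by simpa using hx.1
    have hy1 : (1:ℝ) ≤ y := by simpa using hy.1
    have hh1 : x ^ p ≤ y ^ p := pow_le_pow_left₀ (by linarith) hxy p
    have hh2 : Real.log x ≤ Real.log y := Real.log_le_log (by linarith) hxy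
    exact mul_le_mul hh1 hh2 (Real.log_nonneg hx1) (by positivity)
  have key2a := hmono2.sum_le_integral_Ico (by omega : 1 ≤ N)
  have key2b := hmono2.integral_le_sum_Ico (by omega : 1 ≤ N)
  have hint2 : (∫ x in ((1:ℕ):ℝ)..((N:ℕ):ℝ), x ^ p * Real.log x)
      = (N:ℝ) ^ (p+1) * Real.log N / q - ((N:ℝ) ^ (p+1) - 1) / q ^ 2 := by
    rw [show ((1:ℕ):ℝ) = (1:ℝ) by norm_num, integral_pow_mul_log p hN1, hq]
  have hS2a : (∑ x ∈ Finset.Ico 1 N, ((x:ℕ):ℝ) ^ p * Real.log ((x:ℕ):ℝ))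
      = T2 - (N:ℝ) ^ p * Real.log N := by
    have e1 : (∑ x ∈ Finset.Ico 1 (N+1), ((x:ℕ):ℝ) ^ p * Real.log ((x:ℕ):ℝ))
        = (∑ x ∈ Finset.Ico 1 N, ((x:ℕ):ℝ) ^ p * Real.log ((x:ℕ):ℝ))
          + (N:ℝ) ^ p * Real.log N :=
      Finset.sum_Ico_succ_top (by omega) _
    rw [Finset.Ico_add_one_right_eq_Icc] at e1
    rw [hT2]
    linarith [e1]
  have hS2b : (∑ i ∈ Finset.Ico 1 N, ((i + 1 : ℕ):ℝ) ^ p * Real.log ((i + 1 : ℕ):ℝ)) = T2 := by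
    rw [show (∑ i ∈ Finset.Ico 1 N, ((i + 1 : ℕ):ℝ) ^ p * Real.log ((i + 1 : ℕ):ℝ))
        = ∑ i ∈ Finset.Ico 1 N, (fun j : ℕ => ((j:ℕ):ℝ) ^ p * Real.log ((j:ℕ):ℝ)) (i + 1) from rfl]
    rw [Finset.sum_Ico_add' (fun j : ℕ => ((j:ℕ):ℝ) ^ p * Real.log ((j:ℕ):ℝ)) 1 N 1]
    have e2 : (∑ x ∈ Finset.Ico 1 (N+1), ((x:ℕ):ℝ) ^ p * Real.log ((x:ℕ):ℝ))
        = ((1:ℕ):ℝ) ^ p * Real.log ((1:ℕ):ℝ)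
          + ∑ x ∈ Finset.Ico 2 (N+1), ((x:ℕ):ℝ) ^ p * Real.log ((x:ℕ):ℝ) :=
      Finset.sum_eq_sum_Ico_succ_bot (by omega) _
    rw [Finset.Ico_add_one_right_eq_Icc] at e2
    rw [hT2]
    simp only [Nat.cast_one, one_pow, Real.log_one, mul_zero, zero_add] at e2
    rw [← e2]
  rw [hint2, hS2a] at key2a
  rw [hint2, hS2b] at key2b
  -- elementary estimates
  have hlog : Real.log R - Real.log N ≤ (R - (N:ℝ)) / N := by
    have h1 : Real.log (R / N) ≤ R / N - 1 := Real.log_le_sub_one_of_pos (by positivity)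
    rw [Real.log_div (ne_of_gt hR0) (ne_of_gt hN0)] at h1
    have h2 : R / (N:ℝ) - 1 = (R - N) / N := by field_simp
    linarith [h2 ▸ h1]
  have hlogN : Real.log (N:ℝ) ≤ Real.log R := Real.log_le_log hN0 hNR
  have hlogN0 : 0 ≤ Real.log (N:ℝ) := Real.log_nonneg hN1
  have hpowle : (N:ℝ) ^ p ≤ R ^ p := pow_le_pow_left₀ (le_of_lt hN0) hNR p
  have hpow1 : (1:ℝ) ≤ (N:ℝ) ^ p := one_le_pow₀ hN1
  have hRp1 : (1:ℝ) ≤ R ^ p := hpow1.trans hpowle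
  have hpowsub : R ^ (p+1) - (N:ℝ) ^ (p+1) ≤ q * R ^ p := by
    have h1 := pow_succ_sub_le_aux p (le_of_lt hN0) hNR
    have h2 : ((p:ℝ) + 1) * R ^ p * (R - N) ≤ (((p:ℝ) + 1) * R ^ p) * 1 :=
      mul_le_mul_of_nonneg_left (by linarith) (by positivity)
    rw [hq]
    nlinarith
  have hpowsub2 : (N:ℝ) ^ (p+1) ≤ R ^ (p+1) := pow_le_pow_left₀ (le_of_lt hN0) hNR (p+1)
  -- combined quantities
  set A2 : ℝ := (N:ℝ) ^ (p+1) * (Real.log R - Real.log N) / q with hA2def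
  set E : ℝ := ((N:ℝ) ^ (p+1) - 1 - R ^ (p+1)) / q ^ 2 with hEdef
  have hA : (N:ℝ) ^ (p+1) * (Real.log R - Real.log N) ≤ (N:ℝ) ^ p := by
    calc (N:ℝ) ^ (p+1) * (Real.log R - Real.log N)
        ≤ (N:ℝ) ^ (p+1) * ((R - N) / N) := mul_le_mul_of_nonneg_left hlog (by positivity)
      _ = (N:ℝ) ^ p * (R - N) := by rw [pow_succ]; field_simp
      _ ≤ (N:ℝ) ^ p * 1 := mul_le_mul_of_nonneg_left (by linarith) (by positivity)
      _ = (N:ℝ) ^ p := mul_one _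
  have hA2a : 0 ≤ A2 := by
    rw [hA2def]
    apply div_nonneg (mul_nonneg (by positivity) (by linarith)) (le_of_lt hq0)
  have hA2b : A2 ≤ (N:ℝ) ^ p / 2 := by
    rw [hA2def]
    calc (N:ℝ) ^ (p+1) * (Real.log R - Real.log N) / q ≤ (N:ℝ) ^ p / q :=
          div_le_div_of_nonneg_right hA (le_of_lt hq0)
      _ ≤ (N:ℝ) ^ p / 2 :=
          div_le_div_of_nonneg_left (by positivity) (by norm_num) hq2
  have hE1 : E ≤ 0 := by
    rw [hEdef]
    apply div_nonpos_of_nonpos_of_nonneg (by linarith) (le_of_lt hq2pos)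
  have hE2 : -(R ^ p / 2) - 1/4 ≤ E := by
    rw [hEdef]
    have h1 : (-(q * R ^ p) - 1) / q ^ 2 ≤ ((N:ℝ) ^ (p+1) - 1 - R ^ (p+1)) / q ^ 2 :=
      div_le_div_of_nonneg_right (by linarith [hpowsub]) (le_of_lt hq2pos)
    have h2 : (-(q * R ^ p) - 1) / q ^ 2 = -(R ^ p / q) - 1 / q ^ 2 := by
      field_simp
    have h3 : R ^ p / q ≤ R ^ p / 2 :=
      div_le_div_of_nonneg_left (by positivity) (by norm_num) hq2
    have h4 : 1 / q ^ 2 ≤ 1/4 :=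
      div_le_div_of_nonneg_left (by norm_num) (by norm_num) hq4
    linarith [h2 ▸ h1]
  -- monotone multiplications
  have up1 : Real.log R * T1 ≤ Real.log R * ((N:ℝ) ^ (p+1) / q + (N:ℝ) ^ p) :=
    mul_le_mul_of_nonneg_left (by linarith [key1a]) hL0
  have lo1 : Real.log R * ((N:ℝ) ^ (p+1) / q) ≤ Real.log R * T1 :=
    mul_le_mul_of_nonneg_left key1b hL0
  have hm1 : (N:ℝ) ^ p * Real.log R ≤ R ^ p * Real.log R :=
    mul_le_mul_of_nonneg_right hpowle hL0
  have hm2 : (N:ℝ) ^ p / 2 ≤ (N:ℝ) ^ p * Real.log R := by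
    have := mul_le_mul_of_nonneg_left hL2 (by positivity : (0:ℝ) ≤ (N:ℝ) ^ p)
    linarith
  have hm3 : (N:ℝ) ^ p * Real.log N ≤ R ^ p * Real.log R :=
    mul_le_mul hpowle hlogN hlogN0 (by positivity)
  have hm4 : (1:ℝ)/2 ≤ R ^ p * Real.log R := by nlinarith
  have hm5 : R ^ p / 2 ≤ R ^ p * Real.log R := by nlinarith
  -- identities
  have hidU : Real.log R * ((N:ℝ) ^ (p+1) / q + (N:ℝ) ^ p)
      - ((N:ℝ) ^ (p+1) * Real.log N / q - ((N:ℝ) ^ (p+1) - 1) / q ^ 2)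
      - R ^ (p+1) / q ^ 2 = A2 + (N:ℝ) ^ p * Real.log R + E := by
    rw [hA2def, hEdef]
    field_simp
    ring
  have hidL : Real.log R * ((N:ℝ) ^ (p+1) / q)
      - (((N:ℝ) ^ (p+1) * Real.log N / q - ((N:ℝ) ^ (p+1) - 1) / q ^ 2)
        + (N:ℝ) ^ p * Real.log N)
      - R ^ (p+1) / q ^ 2 = A2 + E - (N:ℝ) ^ p * Real.log N := by
    rw [hA2def, hEdef]
    field_simp
    ring
  rw [hsum, abs_le]
  constructor
  · linarith [lo1, key2a, hidL]
  · linarith [up1, key2b, hidU]
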